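/- Let K be a field of characteristic zero with two ring automorphisms σ and τ, and suppose ω, i ∈ K satisfy ω² = 2, i² = −1, σ(ω) = −ω, σ(i) = i, τ(ω) = ω, τ(i) = −i. Extend σ and τ coefficientwise to K[[q]]. Suppose given, indexed by the subsets J ⊆ {1,2,3}, units Y_J, Z_J ∈ K[[q]] and power series S_J ∈ K[[q]] with zero constant term, such that for each of the three families L ∈ {Y, Z, S}: σ interchanges L_∅ ↔ L_{{1,3}} and L_{{2}} ↔ L_{{1,2,3}} and fixes L_{{1}}, L_{{3}}, L_{{1,2}}, L_{{2,3}}, while τ interchanges L_{{1}} ↔ L_{{3}} and L_{{1,2}} ↔ L_{{2,3}} and fixes L_∅, L_{{2}}, L_{{1,3}}, L_{{1,2,3}}. Then for all integers χ, d, e, k, l, the power series Φ₀ = Σ_{J ⊆ {1,2,3}} (−1)^{|J|·χ} · i^{(Σ_{j∈J} j)·d} · Y_J^{e} · Z_J^{k} · exp(l·S_J) ∈ K[[q]] satisfies σ(Φ₀) = Φ₀ and τ(Φ₀) = Φ₀. In particular, if every element of K fixed by both σ and τ lies in the prime field ℚ, then all coefficients of Φ₀ are rational. -/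

import Mathlib

open PowerSeries

/-- Composition (substitution) `f(g)` of formal power series, correct whenever the
constant term of `g` vanishes. -/
noncomputable def pcomp {K : Type*} [CommRing K] (f g : PowerSeries K) : PowerSeries K :=
  PowerSeries.mk fun n => ∑ k ∈ Finset.range (n + 1), coeff k f * coeff n (g ^ k)

/-- Formal exponential `exp(g)` of a power series `g` with zero constant term. -/
noncomputable def pexp {K : Type*} [Field K] [CharZero K] (g : PowerSeries K) :
    PowerSeries K :=
  pcomp (PowerSeries.exp K) g

section helpers
variable {K : Type*} [Field K] [CharZero K]

lemma map_pexp (φ : K →+* K) (g : PowerSeries K) :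
    map φ (pexp g) = pexp (map φ g) := by
  ext n
  simp only [pexp, pcomp, coeff_map, coeff_mk, map_sum, map_mul, coeff_exp]
  refine Finset.sum_congr rfl fun j _ => ?_
  rw [show (algebraMap ℚ K) (1 / j.factorial) = ((1 / j.factorial : ℚ) : K) from
    eq_ratCast _ _, map_ratCast, ← coeff_map, map_pow]

lemma map_term (φ : K →+* K) {c c' : K} {u u' v v' : (PowerSeries K)ˣ} {s s' : PowerSeries K}
    (e k l : ℤ)
    (hc : φ c = c') (hu : map φ (u : PowerSeries K) = u') (hv : map φ (v : PowerSeries K) = v')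
    (hs : map φ s = s') :
    map φ (C c * ((u ^ e : (PowerSeries K)ˣ) : PowerSeries K) *
      ((v ^ k : (PowerSeries K)ˣ) : PowerSeries K) * pexp (l • s)) =
    C c' * ((u' ^ e : (PowerSeries K)ˣ) : PowerSeries K) *
      ((v' ^ k : (PowerSeries K)ˣ) : PowerSeries K) * pexp (l • s') := by
  have hu2 : Units.map (map φ : PowerSeries K →* PowerSeries K) u = u' := Units.ext hu
  have hv2 : Units.map (map φ : PowerSeries K →* PowerSeries K) v = v' := Units.ext hv
  rw [map_mul, map_mul, map_mul, map_C, hc, map_pexp, map_zsmul, hs,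
    show (map φ ((u ^ e : (PowerSeries K)ˣ) : PowerSeries K)) =
      ((Units.map (map φ : PowerSeries K →* PowerSeries K) (u ^ e) : (PowerSeries K)ˣ) :
        PowerSeries K) from rfl,
    show (map φ ((v ^ k : (PowerSeries K)ˣ) : PowerSeries K)) =
      ((Units.map (map φ : PowerSeries K →* PowerSeries K) (v ^ k) : (PowerSeries K)ˣ) :
        PowerSeries K) from rfl,
    map_zpow, map_zpow, hu2, hv2]

lemma zpow_eq_of_dvd {x : K} (hx : x ≠ 0) {m : ℕ} (hm : x ^ m = 1) {a b : ℤ}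
    (h : (m : ℤ) ∣ a - b) : x ^ a = x ^ b := by
  obtain ⟨t, ht⟩ := h
  have : a = b + (m : ℤ) * t := by linarith
  rw [this, zpow_add₀ hx, zpow_mul, zpow_natCast, hm, one_zpow, mul_one]

lemma i_ne_zero {i : K} (hi : i ^ 2 = -1) : i ≠ 0 := by
  intro h; rw [h] at hi; simp at hi

lemma i_pow_four {i : K} (hi : i ^ 2 = -1) : i ^ 4 = 1 := by
  rw [show (4 : ℕ) = 2 * 2 from rfl, pow_mul, hi]; ring

lemma sigma_coeff {i : K} (hi : i ^ 2 = -1) (σ : K ≃+* K) (hσi : σ i = i)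
    (χ d m m' s s' : ℤ) (hmm : 2 ∣ m - m') (hss : 4 ∣ s - s') :
    σ ((-1 : K) ^ (m * χ) * i ^ (s * d)) = (-1 : K) ^ (m' * χ) * i ^ (s' * d) := by
  rw [map_mul, map_zpow₀, map_zpow₀, map_neg, map_one, hσi,
    zpow_eq_of_dvd (x := (-1 : K)) (by norm_num) (m := 2) (by norm_num)
      (by obtain ⟨t, ht⟩ := hmm; exact ⟨t * χ, by rw [show m * χ - m' * χ = (m - m') * χ by ring, ht]; push_cast; ring⟩),
    zpow_eq_of_dvd (i_ne_zero hi) (i_pow_four hi)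
      (by obtain ⟨t, ht⟩ := hss; exact ⟨t * d, by rw [show s * d - s' * d = (s - s') * d by ring, ht]; push_cast; ring⟩)]

lemma tau_coeff {i : K} (hi : i ^ 2 = -1) (τ : K ≃+* K) (hτi : τ i = -i)
    (χ d m m' s s' : ℤ) (hmm : 2 ∣ m - m') (hss : 4 ∣ 3 * s - s') :
    τ ((-1 : K) ^ (m * χ) * i ^ (s * d)) = (-1 : K) ^ (m' * χ) * i ^ (s' * d) := by
  have h3 : (-i : K) = i ^ (3 : ℤ) := by
    rw [show (3 : ℤ) = (3 : ℕ) from rfl, zpow_natCast, pow_succ, hi]; ring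
  rw [map_mul, map_zpow₀, map_zpow₀, map_neg, map_one, hτi, h3, ← zpow_mul,
    zpow_eq_of_dvd (x := (-1 : K)) (by norm_num) (m := 2) (by norm_num)
      (by obtain ⟨t, ht⟩ := hmm; exact ⟨t * χ, by rw [show m * χ - m' * χ = (m - m') * χ by ring, ht]; push_cast; ring⟩),
    zpow_eq_of_dvd (i_ne_zero hi) (i_pow_four hi)
      (by obtain ⟨t, ht⟩ := hss; exact ⟨t * d, by rw [show 3 * (s * d) - s' * d = (3 * s - s') * d by ring, ht]; push_cast; ring⟩)]

end helpers

/-- The universal `J`-sum `Φ₀ = Σ_{J ⊆ {1,2,3}} (-1)^{|J|χ} i^{‖J‖d} Y_J^e Z_J^k exp(l·S_J)`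
of the rank-4 virtual Segre formula. -/
noncomputable def Phi4 {K : Type*} [Field K] [CharZero K] (ε : K)
    (Y Z : Finset ℕ → (PowerSeries K)ˣ) (S : Finset ℕ → PowerSeries K)
    (χ d e k l : ℤ) : PowerSeries K :=
  ∑ J ∈ ({1, 2, 3} : Finset ℕ).powerset,
    C ((-1 : K) ^ ((J.card : ℤ) * χ) * ε ^ (((J.sum id : ℕ) : ℤ) * d)) *
      ((Y J ^ e : (PowerSeries K)ˣ) : PowerSeries K) *
      ((Z J ^ k : (PowerSeries K)ˣ) : PowerSeries K) *
      pexp (l • S J)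

/-- Rank-4 Galois invariance: if `σ`, `τ` act on the universal series `Y_J`, `Z_J`, `S_J`
by the conjectured permutations, then `Φ₀` is fixed by `σ` and `τ`; in particular when
the fixed field of `{σ,τ}` is `ℚ`, all coefficients of `Φ₀` are rational. -/
theorem rank_four_galois_invariance {K : Type*} [Field K] [CharZero K]
    (σ τ : K ≃+* K) (ω i : K)
    (hω : ω ^ 2 = 2) (hi : i ^ 2 = -1)
    (hσω : σ ω = -ω) (hσi : σ i = i) (hτω : τ ω = ω) (hτi : τ i = -i)
    (Y Z : Finset ℕ → (PowerSeries K)ˣ) (S : Finset ℕ → PowerSeries K)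
    (hS0 : ∀ J ∈ ({1, 2, 3} : Finset ℕ).powerset, constantCoeff (S J) = 0)
    (hYσ₁ : map (σ : K →+* K) (Y ∅ : PowerSeries K) = Y {1, 3})
    (hYσ₂ : map (σ : K →+* K) (Y {1, 3} : PowerSeries K) = Y ∅)
    (hYσ₃ : map (σ : K →+* K) (Y {2} : PowerSeries K) = Y {1, 2, 3})
    (hYσ₄ : map (σ : K →+* K) (Y {1, 2, 3} : PowerSeries K) = Y {2})
    (hYσ₅ : map (σ : K →+* K) (Y {1} : PowerSeries K) = Y {1})
    (hYσ₆ : map (σ : K →+* K) (Y {3} : PowerSeries K) = Y {3})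
    (hYσ₇ : map (σ : K →+* K) (Y {1, 2} : PowerSeries K) = Y {1, 2})
    (hYσ₈ : map (σ : K →+* K) (Y {2, 3} : PowerSeries K) = Y {2, 3})
    (hYτ₁ : map (τ : K →+* K) (Y {1} : PowerSeries K) = Y {3})
    (hYτ₂ : map (τ : K →+* K) (Y {3} : PowerSeries K) = Y {1})
    (hYτ₃ : map (τ : K →+* K) (Y {1, 2} : PowerSeries K) = Y {2, 3})
    (hYτ₄ : map (τ : K →+* K) (Y {2, 3} : PowerSeries K) = Y {1, 2})
    (hYτ₅ : map (τ : K →+* K) (Y ∅ : PowerSeries K) = Y ∅)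
    (hYτ₆ : map (τ : K →+* K) (Y {2} : PowerSeries K) = Y {2})
    (hYτ₇ : map (τ : K →+* K) (Y {1, 3} : PowerSeries K) = Y {1, 3})
    (hYτ₈ : map (τ : K →+* K) (Y {1, 2, 3} : PowerSeries K) = Y {1, 2, 3})
    (hZσ₁ : map (σ : K →+* K) (Z ∅ : PowerSeries K) = Z {1, 3})
    (hZσ₂ : map (σ : K →+* K) (Z {1, 3} : PowerSeries K) = Z ∅)
    (hZσ₃ : map (σ : K →+* K) (Z {2} : PowerSeries K) = Z {1, 2, 3})
    (hZσ₄ : map (σ : K →+* K) (Z {1, 2, 3} : PowerSeries K) = Z {2})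
    (hZσ₅ : map (σ : K →+* K) (Z {1} : PowerSeries K) = Z {1})
    (hZσ₆ : map (σ : K →+* K) (Z {3} : PowerSeries K) = Z {3})
    (hZσ₇ : map (σ : K →+* K) (Z {1, 2} : PowerSeries K) = Z {1, 2})
    (hZσ₈ : map (σ : K →+* K) (Z {2, 3} : PowerSeries K) = Z {2, 3})
    (hZτ₁ : map (τ : K →+* K) (Z {1} : PowerSeries K) = Z {3})
    (hZτ₂ : map (τ : K →+* K) (Z {3} : PowerSeries K) = Z {1})
    (hZτ₃ : map (τ : K →+* K) (Z {1, 2} : PowerSeries K) = Z {2, 3})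
    (hZτ₄ : map (τ : K →+* K) (Z {2, 3} : PowerSeries K) = Z {1, 2})
    (hZτ₅ : map (τ : K →+* K) (Z ∅ : PowerSeries K) = Z ∅)
    (hZτ₆ : map (τ : K →+* K) (Z {2} : PowerSeries K) = Z {2})
    (hZτ₇ : map (τ : K →+* K) (Z {1, 3} : PowerSeries K) = Z {1, 3})
    (hZτ₈ : map (τ : K →+* K) (Z {1, 2, 3} : PowerSeries K) = Z {1, 2, 3})
    (hSσ₁ : map (σ : K →+* K) (S ∅) = S {1, 3})
    (hSσ₂ : map (σ : K →+* K) (S {1, 3}) = S ∅)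
    (hSσ₃ : map (σ : K →+* K) (S {2}) = S {1, 2, 3})
    (hSσ₄ : map (σ : K →+* K) (S {1, 2, 3}) = S {2})
    (hSσ₅ : map (σ : K →+* K) (S {1}) = S {1})
    (hSσ₆ : map (σ : K →+* K) (S {3}) = S {3})
    (hSσ₇ : map (σ : K →+* K) (S {1, 2}) = S {1, 2})
    (hSσ₈ : map (σ : K →+* K) (S {2, 3}) = S {2, 3})
    (hSτ₁ : map (τ : K →+* K) (S {1}) = S {3})
    (hSτ₂ : map (τ : K →+* K) (S {3}) = S {1})
    (hSτ₃ : map (τ : K →+* K) (S {1, 2}) = S {2, 3})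
    (hSτ₄ : map (τ : K →+* K) (S {2, 3}) = S {1, 2})
    (hSτ₅ : map (τ : K →+* K) (S ∅) = S ∅)
    (hSτ₆ : map (τ : K →+* K) (S {2}) = S {2})
    (hSτ₇ : map (τ : K →+* K) (S {1, 3}) = S {1, 3})
    (hSτ₈ : map (τ : K →+* K) (S {1, 2, 3}) = S {1, 2, 3})
    (χ d e k l : ℤ) :
    map (σ : K →+* K) (Phi4 i Y Z S χ d e k l) = Phi4 i Y Z S χ d e k l ∧
    map (τ : K →+* K) (Phi4 i Y Z S χ d e k l) = Phi4 i Y Z S χ d e k l ∧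
    ((∀ x : K, σ x = x → τ x = x → ∃ a : ℚ, x = (a : K)) →
      ∀ n : ℕ, ∃ a : ℚ, coeff n (Phi4 i Y Z S χ d e k l) = (a : K)) := by
  have hexp : Phi4 i Y Z S χ d e k l =
      (C ((-1 : K) ^ ((0 : ℤ) * χ) * i ^ ((0 : ℤ) * d)) * ((Y (∅ : Finset ℕ) ^ e : (PowerSeries K)ˣ) : PowerSeries K) * ((Z (∅ : Finset ℕ) ^ k : (PowerSeries K)ˣ) : PowerSeries K) * pexp (l • S (∅ : Finset ℕ))) +
      (C ((-1 : K) ^ ((1 : ℤ) * χ) * i ^ ((1 : ℤ) * d)) * ((Y ({1} : Finset ℕ) ^ e : (PowerSeries K)ˣ) : PowerSeries K) * ((Z ({1} : Finset ℕ) ^ k : (PowerSeries K)ˣ) : PowerSeries K) * pexp (l • S ({1} : Finset ℕ))) +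
      (C ((-1 : K) ^ ((1 : ℤ) * χ) * i ^ ((2 : ℤ) * d)) * ((Y ({2} : Finset ℕ) ^ e : (PowerSeries K)ˣ) : PowerSeries K) * ((Z ({2} : Finset ℕ) ^ k : (PowerSeries K)ˣ) : PowerSeries K) * pexp (l • S ({2} : Finset ℕ))) +
      (C ((-1 : K) ^ ((1 : ℤ) * χ) * i ^ ((3 : ℤ) * d)) * ((Y ({3} : Finset ℕ) ^ e : (PowerSeries K)ˣ) : PowerSeries K) * ((Z ({3} : Finset ℕ) ^ k : (PowerSeries K)ˣ) : PowerSeries K) * pexp (l • S ({3} : Finset ℕ))) +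
      (C ((-1 : K) ^ ((2 : ℤ) * χ) * i ^ ((3 : ℤ) * d)) * ((Y ({1, 2} : Finset ℕ) ^ e : (PowerSeries K)ˣ) : PowerSeries K) * ((Z ({1, 2} : Finset ℕ) ^ k : (PowerSeries K)ˣ) : PowerSeries K) * pexp (l • S ({1, 2} : Finset ℕ))) +
      (C ((-1 : K) ^ ((2 : ℤ) * χ) * i ^ ((4 : ℤ) * d)) * ((Y ({1, 3} : Finset ℕ) ^ e : (PowerSeries K)ˣ) : PowerSeries K) * ((Z ({1, 3} : Finset ℕ) ^ k : (PowerSeries K)ˣ) : PowerSeries K) * pexp (l • S ({1, 3} : Finset ℕ))) +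
      (C ((-1 : K) ^ ((2 : ℤ) * χ) * i ^ ((5 : ℤ) * d)) * ((Y ({2, 3} : Finset ℕ) ^ e : (PowerSeries K)ˣ) : PowerSeries K) * ((Z ({2, 3} : Finset ℕ) ^ k : (PowerSeries K)ˣ) : PowerSeries K) * pexp (l • S ({2, 3} : Finset ℕ))) +
      (C ((-1 : K) ^ ((3 : ℤ) * χ) * i ^ ((6 : ℤ) * d)) * ((Y ({1, 2, 3} : Finset ℕ) ^ e : (PowerSeries K)ˣ) : PowerSeries K) * ((Z ({1, 2, 3} : Finset ℕ) ^ k : (PowerSeries K)ˣ) : PowerSeries K) * pexp (l • S ({1, 2, 3} : Finset ℕ))) := by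
    rw [Phi4, show ({1, 2, 3} : Finset ℕ).powerset =
      {(∅ : Finset ℕ), {1}, {2}, {3}, {1, 2}, {1, 3}, {2, 3}, {1, 2, 3}} from by decide,
      Finset.sum_insert (a := (∅ : Finset ℕ)) (by decide),
      Finset.sum_insert (a := ({1} : Finset ℕ)) (by decide),
      Finset.sum_insert (a := ({2} : Finset ℕ)) (by decide),
      Finset.sum_insert (a := ({3} : Finset ℕ)) (by decide),
      Finset.sum_insert (a := ({1, 2} : Finset ℕ)) (by decide),
      Finset.sum_insert (a := ({1, 3} : Finset ℕ)) (by decide),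
      Finset.sum_insert (a := ({2, 3} : Finset ℕ)) (by decide),
      Finset.sum_singleton (a := ({1, 2, 3} : Finset ℕ))]
    simp only [show ((∅ : Finset ℕ).card) = 0 from by decide,
      show (({1} : Finset ℕ).card) = 1 from by decide,
      show (({2} : Finset ℕ).card) = 1 from by decide,
      show (({3} : Finset ℕ).card) = 1 from by decide,
      show (({1, 2} : Finset ℕ).card) = 2 from by decide,
      show (({1, 3} : Finset ℕ).card) = 2 from by decide,
      show (({2, 3} : Finset ℕ).card) = 2 from by decide,
      show (({1, 2, 3} : Finset ℕ).card) = 3 from by decide,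
      show ((∅ : Finset ℕ).sum id) = 0 from by decide,
      show (({1} : Finset ℕ).sum id) = 1 from by decide,
      show (({2} : Finset ℕ).sum id) = 2 from by decide,
      show (({3} : Finset ℕ).sum id) = 3 from by decide,
      show (({1, 2} : Finset ℕ).sum id) = 3 from by decide,
      show (({1, 3} : Finset ℕ).sum id) = 4 from by decide,
      show (({2, 3} : Finset ℕ).sum id) = 5 from by decide,
      show (({1, 2, 3} : Finset ℕ).sum id) = 6 from by decide,
      Nat.cast_zero, Nat.cast_one, Nat.cast_ofNat]
    ring
  have h1 : map (σ : K →+* K) (Phi4 i Y Z S χ d e k l) = Phi4 i Y Z S χ d e k l := by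
    rw [hexp]
    simp only [map_add]
    rw [map_term (σ : K →+* K) e k l (sigma_coeff hi σ hσi χ d 0 2 0 4 (by norm_num) (by norm_num)) hYσ₁ hZσ₁ hSσ₁,
      map_term (σ : K →+* K) e k l (sigma_coeff hi σ hσi χ d 1 1 1 1 (by norm_num) (by norm_num)) hYσ₅ hZσ₅ hSσ₅,
      map_term (σ : K →+* K) e k l (sigma_coeff hi σ hσi χ d 1 3 2 6 (by norm_num) (by norm_num)) hYσ₃ hZσ₃ hSσ₃,
      map_term (σ : K →+* K) e k l (sigma_coeff hi σ hσi χ d 1 1 3 3 (by norm_num) (by norm_num)) hYσ₆ hZσ₆ hSσ₆,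
      map_term (σ : K →+* K) e k l (sigma_coeff hi σ hσi χ d 2 2 3 3 (by norm_num) (by norm_num)) hYσ₇ hZσ₇ hSσ₇,
      map_term (σ : K →+* K) e k l (sigma_coeff hi σ hσi χ d 2 0 4 0 (by norm_num) (by norm_num)) hYσ₂ hZσ₂ hSσ₂,
      map_term (σ : K →+* K) e k l (sigma_coeff hi σ hσi χ d 2 2 5 5 (by norm_num) (by norm_num)) hYσ₈ hZσ₈ hSσ₈,
      map_term (σ : K →+* K) e k l (sigma_coeff hi σ hσi χ d 3 1 6 2 (by norm_num) (by norm_num)) hYσ₄ hZσ₄ hSσ₄]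
    ring
  have h2 : map (τ : K →+* K) (Phi4 i Y Z S χ d e k l) = Phi4 i Y Z S χ d e k l := by
    rw [hexp]
    simp only [map_add]
    rw [map_term (τ : K →+* K) e k l (tau_coeff hi τ hτi χ d 0 0 0 0 (by norm_num) (by norm_num)) hYτ₅ hZτ₅ hSτ₅,
      map_term (τ : K →+* K) e k l (tau_coeff hi τ hτi χ d 1 1 1 3 (by norm_num) (by norm_num)) hYτ₁ hZτ₁ hSτ₁,
      map_term (τ : K →+* K) e k l (tau_coeff hi τ hτi χ d 1 1 2 2 (by norm_num) (by norm_num)) hYτ₆ hZτ₆ hSτ₆,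
      map_term (τ : K →+* K) e k l (tau_coeff hi τ hτi χ d 1 1 3 1 (by norm_num) (by norm_num)) hYτ₂ hZτ₂ hSτ₂,
      map_term (τ : K →+* K) e k l (tau_coeff hi τ hτi χ d 2 2 3 5 (by norm_num) (by norm_num)) hYτ₃ hZτ₃ hSτ₃,
      map_term (τ : K →+* K) e k l (tau_coeff hi τ hτi χ d 2 2 4 4 (by norm_num) (by norm_num)) hYτ₇ hZτ₇ hSτ₇,
      map_term (τ : K →+* K) e k l (tau_coeff hi τ hτi χ d 2 2 5 3 (by norm_num) (by norm_num)) hYτ₄ hZτ₄ hSτ₄,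
      map_term (τ : K →+* K) e k l (tau_coeff hi τ hτi χ d 3 3 6 6 (by norm_num) (by norm_num)) hYτ₈ hZτ₈ hSτ₈]
    ring
  refine ⟨h1, h2, fun hfix n => ?_⟩
  refine hfix _ ?_ ?_
  · have := congrArg (coeff n) h1; rwa [coeff_map] at this
  · have := congrArg (coeff n) h2; rwa [coeff_map] at this
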